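/- Let θ, θ* ∈ ℝ^d and x₁,...,xₜ ∈ ℝ^d with D := max_s |x_s^T(θ − θ*)| ≤ 1. Define H(θ) = Σ_s μ'(x_s^T θ) x_s x_s^T where μ is the logistic function. Then (1/(2D+1))·H(θ*) ⪯ H(θ) ⪯ (2D+1)·H(θ*) in the Loewner order. -/

import Mathlib

open Matrix

noncomputable def logistic (z : ℝ) : ℝ := 1 / (1 + Real.exp (-z))

noncomputable def fisherH (d t : ℕ) (x : Fin t → Fin d → ℝ) (θ : Fin d → ℝ) :
    Matrix (Fin d) (Fin d) ℝ :=
  ∑ s, deriv logistic (x s ⬝ᵥ θ) • vecMulVec (x s) (x s)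

lemma deriv_logistic (z : ℝ) :
    deriv logistic z = Real.exp z / (1 + Real.exp z) ^ 2 := by
  have hpos : (0:ℝ) < 1 + Real.exp (-z) := by positivity
  have h1 : HasDerivAt (fun z : ℝ => 1 + Real.exp (-z)) (-Real.exp (-z)) z := by
    simpa using (HasDerivAt.exp (hasDerivAt_neg z)).const_add 1
  have h : HasDerivAt (fun y : ℝ => 1 / (1 + Real.exp (-y)))
      (Real.exp (-z) / (1 + Real.exp (-z)) ^ 2) z := by
    simpa [one_div, neg_neg, Pi.inv_def] using h1.inv hpos.ne'
  have : deriv logistic z = Real.exp (-z) / (1 + Real.exp (-z)) ^ 2 := h.deriv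
  rw [this, Real.exp_neg]
  have he : (0:ℝ) < Real.exp z := Real.exp_pos z
  field_simp
  ring

lemma dl_pos (z : ℝ) : 0 < deriv logistic z := by
  rw [deriv_logistic]; positivity

lemma dl_ratio {a b D : ℝ} (hab : |a - b| ≤ D) (hD1 : D ≤ 1) :
    deriv logistic a ≤ (2 * D + 1) * deriv logistic b := by
  have hD0 : 0 ≤ D := le_trans (abs_nonneg _) hab
  have key : deriv logistic a ≤ Real.exp |a - b| * deriv logistic b := by
    rw [deriv_logistic, deriv_logistic]
    have ha : (0:ℝ) < Real.exp a := Real.exp_pos a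
    have hb : (0:ℝ) < Real.exp b := Real.exp_pos b
    have hpa : (0:ℝ) < (1 + Real.exp a) ^ 2 := by positivity
    have hpb : (0:ℝ) < (1 + Real.exp b) ^ 2 := by positivity
    rw [div_le_iff₀ hpa, mul_comm (Real.exp |a - b|), mul_assoc, div_mul_eq_mul_div,
      le_div_iff₀ hpb]
    rcases le_total a b with h | h
    · rw [abs_of_nonpos (by linarith)]
      have h1 : 1 + Real.exp b ≤ Real.exp (b - a) * (1 + Real.exp a) := by
        have he : Real.exp (b - a) * Real.exp a = Real.exp b := by
          rw [← Real.exp_add]; ring_nf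
        have h2 : (1:ℝ) ≤ Real.exp (b - a) := Real.one_le_exp (by linarith)
        nlinarith
      have hsq : (1 + Real.exp b) ^ 2 ≤ (Real.exp (b - a)) ^ 2 * (1 + Real.exp a) ^ 2 := by
        have hnn : (0:ℝ) ≤ 1 + Real.exp b := by positivity
        nlinarith [Real.exp_pos (b - a), sq_nonneg (1 + Real.exp a)]
      have hrw : Real.exp a * ((Real.exp (b-a))^2 * (1 + Real.exp a)^2)
          = Real.exp b * (Real.exp (-(a-b)) * (1 + Real.exp a)^2) := by
        rw [Real.exp_sub, Real.exp_neg, Real.exp_sub]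
        field_simp
      calc Real.exp a * (1 + Real.exp b) ^ 2
          ≤ Real.exp a * ((Real.exp (b-a))^2 * (1 + Real.exp a)^2) :=
            mul_le_mul_of_nonneg_left hsq ha.le
        _ = Real.exp b * (Real.exp (-(a-b)) * (1 + Real.exp a)^2) := hrw
    · rw [abs_of_nonneg (by linarith)]
      have hrw : Real.exp b * (Real.exp (a - b) * (1 + Real.exp a) ^ 2)
          = Real.exp a * (1 + Real.exp a) ^ 2 := by
        rw [Real.exp_sub]
        field_simp
      rw [hrw]
      have h1 : Real.exp b ≤ Real.exp a := Real.exp_le_exp.mpr h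
      have h2 : (1 + Real.exp b) ^ 2 ≤ (1 + Real.exp a) ^ 2 := by nlinarith
      exact mul_le_mul_of_nonneg_left h2 ha.le
  have hexp : Real.exp |a - b| ≤ 2 * D + 1 := by
    have h1 : Real.exp |a - b| ≤ Real.exp D := Real.exp_le_exp.mpr hab
    have h2 : Real.exp D ≤ 1 + 2 * D := by
      have h3 := Real.exp_bound' hD0 hD1 (n := 3) (by norm_num)
      have h4 : (∑ m ∈ Finset.range 3, D ^ m / m.factorial) = 1 + D + D ^ 2 / 2 := by
        norm_num [Finset.sum_range_succ]
      rw [h4] at h3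
      norm_num [Nat.factorial] at h3
      have hsq : D ^ 2 ≤ D := by nlinarith
      have hcub : D ^ 3 ≤ D := by nlinarith
      linarith
    linarith
  have := mul_le_mul_of_nonneg_right hexp (dl_pos b).le
  linarith [key]

lemma psd_term {d' : ℕ} (c : ℝ) (hc : 0 ≤ c) (v : Fin d' → ℝ) :
    (c • vecMulVec v v : Matrix (Fin d') (Fin d') ℝ).PosSemidef := by
  rw [posSemidef_iff_dotProduct_mulVec]
  constructor
  · ext i j
    simp [Matrix.conjTranspose_apply, vecMulVec_apply, mul_comm]
  · intro y
    have hv : ((c • vecMulVec v v : Matrix (Fin d') (Fin d') ℝ) *ᵥ y)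
        = fun i => c * v i * (v ⬝ᵥ y) := by
      ext i
      simp only [Matrix.mulVec, dotProduct, Matrix.smul_apply, vecMulVec_apply,
        smul_eq_mul, Finset.mul_sum]
      exact Finset.sum_congr rfl fun j _ => by ring
    rw [hv]
    have h2 : (star y) ⬝ᵥ (fun i => c * v i * (v ⬝ᵥ y)) = c * (v ⬝ᵥ y) ^ 2 := by
      simp only [dotProduct, star_trivial, Pi.star_apply]
      rw [Finset.sum_congr rfl fun x (_ : x ∈ Finset.univ) =>
        show y x * (c * v x * ∑ i, v i * y i) = c * (∑ i, v i * y i) * (v x * y x) from by ring,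
        ← Finset.mul_sum]
      ring
    rw [h2]
    positivity

lemma fisher_sub (d t : ℕ) (x : Fin t → Fin d → ℝ) (θ θstar : Fin d → ℝ) (c : ℝ) :
    fisherH d t x θ - c • fisherH d t x θstar
      = ∑ s, (deriv logistic (x s ⬝ᵥ θ) - c * deriv logistic (x s ⬝ᵥ θstar)) •
          vecMulVec (x s) (x s) := by
  unfold fisherH
  rw [Finset.smul_sum, ← Finset.sum_sub_distrib]
  exact Finset.sum_congr rfl fun s _ => by rw [sub_smul, smul_smul]

theorem stmt_13 (d t : ℕ) (x : Fin t → Fin d → ℝ) (θ θstar : Fin d → ℝ) (D : ℝ)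
    (hD0 : 0 ≤ D) (hD1 : D ≤ 1)
    (hmax : ∀ s, |x s ⬝ᵥ (θ - θstar)| ≤ D) :
    (fisherH d t x θ - (2 * D + 1)⁻¹ • fisherH d t x θstar).PosSemidef ∧
    ((2 * D + 1) • fisherH d t x θstar - fisherH d t x θ).PosSemidef := by
  have hc : (0:ℝ) < 2 * D + 1 := by linarith
  have hdiff : ∀ s, |x s ⬝ᵥ θ - x s ⬝ᵥ θstar| ≤ D := by
    intro s
    have := hmax s
    rwa [dotProduct_sub] at this
  constructor
  · rw [fisher_sub]
    refine Finset.sum_induction _ _ (fun A B hA hB => hA.add hB) Matrix.PosSemidef.zero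
      fun s _ => psd_term _ ?_ _
    have h := dl_ratio (a := x s ⬝ᵥ θstar) (b := x s ⬝ᵥ θ) (by rw [abs_sub_comm]; exact hdiff s) hD1
    rw [sub_nonneg, inv_mul_le_iff₀ hc, mul_comm]
    linarith
  · have : (2 * D + 1) • fisherH d t x θstar - fisherH d t x θ
        = ∑ s, ((2 * D + 1) * deriv logistic (x s ⬝ᵥ θstar) - deriv logistic (x s ⬝ᵥ θ)) •
            vecMulVec (x s) (x s) := by
      have h := fisher_sub d t x θstar θ 1
      unfold fisherH at *
      rw [Finset.smul_sum]
      rw [← Finset.sum_sub_distrib]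
      exact Finset.sum_congr rfl fun s _ => by rw [smul_smul, ← sub_smul]
    rw [this]
    refine Finset.sum_induction _ _ (fun A B hA hB => hA.add hB) Matrix.PosSemidef.zero
      fun s _ => psd_term _ ?_ _
    have h := dl_ratio (hdiff s) hD1
    linarith
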